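/- For every integer n ≥ 3, if a(n) ≠ 1 then a(n) > n, where a(n) = (n² − n − 1)/gcd(n² − n − 1, (n−1)!). -/

import Mathlib

private lemma five_pow_aux (j : ℕ) (hj : 2 ≤ j) : 2 * j + 1 ≤ 5 ^ (j - 1) := by
  induction j with
  | zero => omega
  | succ t ih =>
    rcases Nat.lt_or_ge t 2 with h | h
    · interval_cases t <;> simp_all <;> omega
    · have h1 := ih h
      have h2 : 5 ^ (t - 1) * 5 = 5 ^ (t + 1 - 1) := by
        rw [← pow_succ]; congr 1; omega
      nlinarith

private lemma fin_case (p n m : ℕ) (hp : p.Prime) (hp5 : 5 ≤ p) (hp9 : p < 9)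
    (hq : m + n + 1 = n * n) (hd : p ^ 3 ∣ m) (hlt : m < 9 * (p * p))
    (hn : 3 ≤ n) (hnp : n ≤ 3 * p) : False := by
  interval_cases p
  · norm_num at hd hlt
    have hn' : n ≤ 15 := by omega
    interval_cases n <;> omega
  · norm_num at hp
  · norm_num at hd hlt
    have hn' : n ≤ 21 := by omega
    interval_cases n <;> omega
  · norm_num at hp

private lemma key_val (n p : ℕ) (hn : 3 ≤ n) (hp : p.Prime) (hple : p ≤ n - 1) :
    (n ^ 2 - n - 1).factorization p ≤ (Nat.factorial (n - 1)).factorization p := by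
  set m := n ^ 2 - n - 1 with hmdef
  rw [pow_two] at hmdef
  have h3n : 3 * n ≤ n * n := Nat.mul_le_mul_right n hn
  have hq : m + n + 1 = n * n := by omega
  have hm0 : m ≠ 0 := by omega
  have he : (n - 1) * n = n * n - n := Nat.sub_one_mul n n
  have hev : 2 ∣ (n - 1) * n := by
    have h := Nat.even_mul_succ_self (n - 1)
    rw [Nat.sub_add_cancel (by omega : 1 ≤ n)] at h
    exact h.two_dvd
  have hodd : ¬ 2 ∣ m := by omega
  have e3 : (n - 1) * n % 3 = (n - 1) % 3 * (n % 3) % 3 := Nat.mul_mod _ _ _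
  have h3 : ¬ 3 ∣ m := by
    intro hdvd
    have hn3 : n % 3 = 0 ∨ n % 3 = 1 ∨ n % 3 = 2 := by omega
    rcases hn3 with h' | h' | h'
    · have h'' : (n - 1) % 3 = 2 := by omega
      rw [h', h''] at e3; omega
    · have h'' : (n - 1) % 3 = 0 := by omega
      rw [h', h''] at e3; omega
    · have h'' : (n - 1) % 3 = 1 := by omega
      rw [h', h''] at e3; omega
  by_cases hp2 : p = 2
  · subst hp2
    rw [Nat.factorization_eq_zero_of_not_dvd hodd]
    exact Nat.zero_le _
  by_cases hp3 : p = 3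
  · subst hp3
    rw [Nat.factorization_eq_zero_of_not_dvd h3]
    exact Nat.zero_le _
  have hp5 : 5 ≤ p := by
    have h2 := hp.two_le
    have h4 : p ≠ 4 := by rintro rfl; norm_num at hp
    omega
  set k := m.factorization p with hk
  have hpk : p ^ k ∣ m := Nat.ordProj_dvd m p
  have hplt : 1 < p := hp.one_lt
  have hn1 : n - 1 ≠ 0 := by omega
  set j := Nat.log p (n - 1) with hj
  have hj1 : 1 ≤ j := (Nat.le_log_iff_pow_le hplt hn1).mpr (by simpa using hple)
  have hjle : p ^ j ≤ n - 1 := (Nat.le_log_iff_pow_le hplt hn1).mp le_rfl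
  have hjub : n - 1 < p ^ (j + 1) := Nat.lt_pow_succ_log_self hplt (n - 1)
  haveI : Fact p.Prime := ⟨hp⟩
  have hfact : (Nat.factorial (n - 1)).factorization p
      = ∑ i ∈ Finset.Ico 1 (j + 1), (n - 1) / p ^ i := by
    rw [Nat.factorization_def _ hp,
      padicValNat_factorial (by omega : Nat.log p (n - 1) < j + 1)]
  rw [hfact]
  by_cases hcase : p ^ k ≤ n - 1
  · have hkj : k ≤ j := (Nat.le_log_iff_pow_le hplt hn1).mpr hcase
    calc k = ∑ _i ∈ Finset.Ico 1 (k + 1), 1 := by simp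
      _ ≤ ∑ i ∈ Finset.Ico 1 (k + 1), (n - 1) / p ^ i := by
          refine Finset.sum_le_sum fun i hi => ?_
          have hik : i ≤ k := by
            have := Finset.mem_Ico.mp hi; omega
          have : p ^ i ≤ n - 1 :=
            le_trans (Nat.pow_le_pow_right hplt.le hik) hcase
          have hpos : 0 < p ^ i := pow_pos hp.pos i
          exact Nat.one_le_div_iff hpos |>.mpr this
      _ ≤ ∑ i ∈ Finset.Ico 1 (j + 1), (n - 1) / p ^ i :=
          Finset.sum_le_sum_of_subset (Finset.Ico_subset_Ico le_rfl (by omega))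
  · push_neg at hcase
    have hjk : j < k := by
      by_contra hh
      push_neg at hh
      exact absurd (le_trans (Nat.pow_le_pow_right hplt.le hh) hjle)
        (not_le.mpr hcase)
    have hexp : p ^ (j + 1) * p ^ (j + 1) = p ^ (2 * j + 2) := by
      rw [← pow_add]; ring_nf
    have hmlt : m < p ^ (2 * j + 2) := by
      have h1 : n ≤ p ^ (j + 1) := by omega
      have h2 : n * n ≤ p ^ (j + 1) * p ^ (j + 1) := Nat.mul_le_mul h1 h1
      omega
    have hpkm : p ^ k ≤ m := Nat.le_of_dvd (by omega) hpk
    have hkub : k ≤ 2 * j + 1 := by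
      by_contra hh
      push_neg at hh
      have : p ^ (2 * j + 2) ≤ p ^ k := Nat.pow_le_pow_right hplt.le (by omega)
      omega
    have hdiv : p ^ (j - 1) ≤ (n - 1) / p := by
      rw [Nat.le_div_iff_mul_le hp.pos]
      calc p ^ (j - 1) * p = p ^ j := by rw [← pow_succ]; congr 1; omega
        _ ≤ n - 1 := hjle
    have hsingle : (n - 1) / p ≤ ∑ i ∈ Finset.Ico 1 (j + 1), (n - 1) / p ^ i := by
      have hmem : (1 : ℕ) ∈ Finset.Ico 1 (j + 1) := by
        simp only [Finset.mem_Ico]; omega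
      calc (n - 1) / p = (n - 1) / p ^ 1 := by rw [pow_one]
        _ ≤ _ := Finset.single_le_sum (f := fun i => (n - 1) / p ^ i)
            (fun i _ => Nat.zero_le _) hmem
    rcases Nat.lt_or_ge j 2 with hj2 | hj2
    · -- j = 1
      have hjeq : j = 1 := by omega
      have hk3 : k ≤ 3 := by omega
      have hk2 : 2 ≤ k := by omega
      have hp2m : p ^ 2 ∣ m := (pow_dvd_pow p hk2).trans hpk
      have hsq : p ^ 2 = p * p := sq p
      have hA : (n - 1) * (n - 1) = n * (n - 1) - (n - 1) := Nat.sub_one_mul n (n - 1)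
      have hB : n * (n - 1) = n * n - n := Nat.mul_sub_one n n
      have h1pp : p * p ≤ (n - 1) * (n - 1) := Nat.mul_le_mul hple hple
      have hplm : p * p < m := by omega
      rcases Nat.lt_or_ge (n - 1) (2 * p) with hsmall | hbig
      · -- n ≤ 2p : m ∈ {2p², 3p²}, contradiction with parity / mod 3
        obtain ⟨t, ht⟩ := hp2m
        rw [hsq] at ht
        have hm4 : m < 4 * (p * p) := by
          have h1 : n ≤ 2 * p := by omega
          have h2 : n * n ≤ 2 * p * (2 * p) := Nat.mul_le_mul h1 h1
          have h3' : 2 * p * (2 * p) = 4 * (p * p) := by ring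
          omega
        have ht23 : t = 2 ∨ t = 3 := by
          rcases le_or_gt t 1 with h' | h'
          · exfalso
            have := Nat.mul_le_mul_left (p * p) h'
            rw [mul_one] at this
            omega
          rcases Nat.lt_or_ge t 4 with h'' | h''
          · omega
          · exfalso
            have := Nat.mul_le_mul_left (p * p) h''
            omega
        rcases ht23 with rfl | rfl
        · exact absurd ⟨p * p, by rw [ht]; ring⟩ hodd
        · exact absurd ⟨p * p, by rw [ht]; ring⟩ h3
      · have hS2 : 2 ≤ (n - 1) / p := by
          rw [Nat.le_div_iff_mul_le hp.pos]; omega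
        rcases Nat.lt_or_ge k 3 with hkk | hkk
        · omega
        · rcases Nat.lt_or_ge (n - 1) (3 * p) with h3p | h3p
          · -- k = 3, n ≤ 3p : p ∈ {5, 7}, finite check
            have hp3m : p ^ 3 ∣ m := (pow_dvd_pow p hkk).trans hpk
            have hp3le : p ^ 3 ≤ m := Nat.le_of_dvd (by omega) hp3m
            have hm9 : m < 9 * (p * p) := by
              have h1 : n ≤ 3 * p := by omega
              have h2 : n * n ≤ 3 * p * (3 * p) := Nat.mul_le_mul h1 h1
              have h3' : 3 * p * (3 * p) = 9 * (p * p) := by ring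
              omega
            have hcube : p ^ 3 = p * (p * p) := by ring
            have hp9 : p < 9 := by
              by_contra hh
              push_neg at hh
              have := Nat.mul_le_mul_right (p * p) hh
              omega
            exact (fin_case p n m hp hp5 hp9 hq hp3m hm9 hn (by omega)).elim
          · have hS3 : 3 ≤ (n - 1) / p := by
              rw [Nat.le_div_iff_mul_le hp.pos]; omega
            omega
    · -- j ≥ 2
      have h5 : 2 * j + 1 ≤ 5 ^ (j - 1) := five_pow_aux j hj2
      have h5p : 5 ^ (j - 1) ≤ p ^ (j - 1) := Nat.pow_le_pow_left (by omega) _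
      omega

def a (n : ℕ) : ℕ := (n^2 - n - 1) / Nat.gcd (n^2 - n - 1) (Nat.factorial (n - 1))

theorem a_gt_n_of_ne_one (n : ℕ) (hn : 3 ≤ n) (h : a n ≠ 1) : n < a n := by
  have h3n : 3 * n ≤ n * n := Nat.mul_le_mul_right n hn
  have hq : (n ^ 2 - n - 1) + n + 1 = n * n := by
    rw [pow_two]; omega
  have hm0 : n ^ 2 - n - 1 ≠ 0 := by omega
  have hf0 : Nat.factorial (n - 1) ≠ 0 := Nat.factorial_ne_zero _
  have hg : Nat.gcd (n ^ 2 - n - 1) (Nat.factorial (n - 1)) ∣ n ^ 2 - n - 1 :=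
    Nat.gcd_dvd_left _ _
  have hg0 : 0 < Nat.gcd (n ^ 2 - n - 1) (Nat.factorial (n - 1)) :=
    Nat.gcd_pos_of_pos_left _ (by omega)
  have ha : a n = (n ^ 2 - n - 1) / Nat.gcd (n ^ 2 - n - 1) (Nat.factorial (n - 1)) := rfl
  have ha0 : a n ≠ 0 := by
    rw [ha]
    exact Nat.ne_of_gt (Nat.div_pos (Nat.le_of_dvd (by omega) hg) hg0)
  obtain ⟨p, hp, hpa⟩ := Nat.exists_prime_and_dvd h
  have hdvd : a n ∣ n ^ 2 - n - 1 := by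
    rw [ha]
    exact ⟨_, (Nat.div_mul_cancel hg).symm⟩
  have hpm : p ∣ n ^ 2 - n - 1 := hpa.trans hdvd
  have hnotdvd : ¬ p ∣ n := by
    intro hd
    have h1 : p ∣ n * n := hd.mul_left n
    have h2 : p ∣ (n ^ 2 - n - 1) + n + 1 := hq ▸ h1
    have h3 : p ∣ n + 1 := by
      have := Nat.dvd_sub h2 hpm
      have e : (n ^ 2 - n - 1) + n + 1 - (n ^ 2 - n - 1) = n + 1 := by omega
      rwa [e] at this
    have h4 : p ∣ 1 := by
      have := Nat.dvd_sub h3 hd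
      have e : n + 1 - n = 1 := by omega
      rwa [e] at this
    have h5 := Nat.le_of_dvd one_pos h4
    have h6 := hp.two_le
    omega
  have hnp : n < p := by
    by_contra hh
    push_neg at hh
    have hne : p ≠ n := fun e => hnotdvd (e ▸ dvd_refl p)
    have hple : p ≤ n - 1 := by omega
    have hkey := key_val n p hn hp hple
    have h1 : 0 < (a n).factorization p := hp.factorization_pos_of_dvd ha0 hpa
    rw [ha, Nat.factorization_div hg, Finsupp.tsub_apply,
      Nat.factorization_gcd hm0 hf0, Finsupp.inf_apply] at h1
    have hmin : (n ^ 2 - n - 1).factorization p ⊓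
        (Nat.factorial (n - 1)).factorization p
        = min ((n ^ 2 - n - 1).factorization p)
            ((Nat.factorial (n - 1)).factorization p) := rfl
    rw [hmin] at h1
    omega
  exact lt_of_lt_of_le hnp (Nat.le_of_dvd (Nat.pos_of_ne_zero ha0) hpa)
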